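/- Let 𝔖 be a set association scheme on a finite set Ω and let G be a subgroup of Sym(k), k ≥ 1. Then the wreath product 𝔖 ≀ G is schurian if and only if 𝔖 is schurian. -/

import Mathlib

namespace Paper


def IsTriangle {Ω : Type*} (a b c : Set Ω) : Prop :=
  a ⊆ b ∪ c ∧ b ⊆ a ∪ c ∧ c ⊆ a ∪ b

noncomputable def tripleType {Ω : Type*} (a b c : Set Ω) : ℕ × ℕ × ℕ × ℕ × ℕ × ℕ × ℕ :=
  (a.ncard, b.ncard, c.ncard, (a ∩ b).ncard, (a ∩ c).ncard, (b ∩ c).ncard, (a ∩ b ∩ c).ncard)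

noncomputable def typeCount {Ω : Type*} (β γ : Set (Set Ω)) (a : Set Ω) (τ : ℕ × ℕ × ℕ × ℕ × ℕ × ℕ × ℕ) : ℕ :=
  {p : Set Ω × Set Ω | p.1 ∈ β ∧ p.2 ∈ γ ∧ tripleType a p.1 p.2 = τ}.ncard

def IsSAS {Ω : Type*} (S : Set (Set (Set Ω))) : Prop :=
  Setoid.IsPartition S ∧
  (∀ α ∈ S, ∀ a ∈ α, ∀ a' ∈ α, Set.ncard a = Set.ncard a') ∧
  (∀ α ∈ S, ∀ β ∈ S, ∀ γ ∈ S, ∀ a ∈ α, ∀ a' ∈ α,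
    ∀ t₁ t₂ t₃ : Set Ω, IsTriangle t₁ t₂ t₃ →
      typeCount β γ a (tripleType t₁ t₂ t₃) = typeCount β γ a' (tripleType t₁ t₂ t₃))

def SetHomog {Ω : Type*} (S : Set (Set (Set Ω))) : Prop :=
  {a : Set Ω | ∃ v : Ω, a = {v}} ∈ S

def setAutGroup {Ω : Type*} (S : Set (Set (Set Ω))) : Subgroup (Equiv.Perm Ω) where
  carrier := {π | ∀ α ∈ S, ∀ a : Set Ω, a ∈ α ↔ ⇑π '' a ∈ α}
  one_mem' := by intro α hα a; simp
  mul_mem' := by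
    intro g h hg hh α hα a
    have h1 : ⇑(g * h) '' a = ⇑g '' (⇑h '' a) := by
      rw [Equiv.Perm.coe_mul, Set.image_comp]
    rw [h1]
    exact (hh α hα a).trans (hg α hα (⇑h '' a))
  inv_mem' := by
    intro g hg α hα a
    have h0 := hg α hα (⇑g⁻¹ '' a)
    have h2 : ⇑g '' (⇑g⁻¹ '' a) = a := by
      simp [← Set.image_comp]
    rw [h2] at h0
    exact h0.symm

def SetSchurian {Ω : Type*} (S : Set (Set (Set Ω))) : Prop :=
  S = Set.range (fun a : Set Ω => {b : Set Ω | ∃ π ∈ setAutGroup S, b = ⇑π '' a})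

def fiber {Ω : Type*} {k : ℕ} (s : Set (Ω × Fin k)) (j : Fin k) : Set Ω := {ω | (ω, j) ∈ s}

def wreath {Ω : Type*} (S : Set (Set (Set Ω))) {k : ℕ} (G : Subgroup (Equiv.Perm (Fin k))) :
    Set (Set (Set (Ω × Fin k))) :=
  {c | ∃ α : Fin k → Set (Set Ω), (∀ j, α j ∈ S) ∧
      c = {s : Set (Ω × Fin k) | ∃ π ∈ G, ∀ j, fiber s j ∈ α (π⁻¹ j)}}

section Proof

variable {Ω : Type*}

theorem mem_setAutGroup {S : Set (Set (Set Ω))} {π : Equiv.Perm Ω} :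
    π ∈ setAutGroup S ↔ ∀ α ∈ S, ∀ a : Set Ω, a ∈ α ↔ ⇑π '' a ∈ α := Iff.rfl

theorem perm_image_inv (π : Equiv.Perm Ω) (a : Set Ω) : ⇑π⁻¹ '' (⇑π '' a) = a := by
  simp [← Set.image_comp]

theorem perm_image_mul (π ρ : Equiv.Perm Ω) (a : Set Ω) :
    ⇑(π * ρ) '' a = ⇑π '' (⇑ρ '' a) := by
  rw [Equiv.Perm.coe_mul, Set.image_comp]

theorem cell_eq {S : Set (Set (Set Ω))} (hP : Setoid.IsPartition S) {α β : Set (Set Ω)}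
    (hα : α ∈ S) (hβ : β ∈ S) {a : Set Ω} (ha : a ∈ α) (hb : a ∈ β) : α = β := by
  obtain ⟨γ, -, hu⟩ := hP.2 a
  rw [hu α ⟨hα, ha⟩, hu β ⟨hβ, hb⟩]

theorem cell_nonempty {S : Set (Set (Set Ω))} (hP : Setoid.IsPartition S)
    {α : Set (Set Ω)} (hα : α ∈ S) : α.Nonempty := by
  rcases Set.eq_empty_or_nonempty α with h | h
  · exact absurd (h ▸ hα) hP.1
  · exact h

theorem empty_cell_mem [Finite Ω] {S : Set (Set (Set Ω))} (hS : IsSAS S) :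
    ({∅} : Set (Set Ω)) ∈ S := by
  obtain ⟨ε, ⟨hε, hem⟩, -⟩ := hS.1.2 ∅
  have hεe : ε = {∅} := by
    ext b
    simp only [Set.mem_singleton_iff]
    constructor
    · intro hb
      have hcard := hS.2.1 ε hε b hb ∅ hem
      rw [Set.ncard_empty] at hcard
      exact (Set.ncard_eq_zero b.toFinite).mp hcard
    · rintro rfl; exact hem
  rwa [hεe] at hε

theorem rel_of_schurian {S : Set (Set (Set Ω))} (hSch : SetSchurian S)
    {β : Set (Set Ω)} (hβ : β ∈ S) {x y : Set Ω} (hx : x ∈ β) (hy : y ∈ β) :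
    ∃ g ∈ setAutGroup S, y = ⇑g '' x := by
  rw [hSch] at hβ
  obtain ⟨a, rfl⟩ := hβ
  obtain ⟨g₁, hg₁, rfl⟩ := hx
  obtain ⟨g₂, hg₂, rfl⟩ := hy
  refine ⟨g₂ * g₁⁻¹, mul_mem hg₂ (inv_mem hg₁), ?_⟩
  rw [perm_image_mul, perm_image_inv]

theorem set_eq_of_fiber_eq {k : ℕ} {s t : Set (Ω × Fin k)}
    (h : ∀ j, fiber s j = fiber t j) : s = t := by
  ext ⟨ω, j⟩
  exact Set.ext_iff.mp (h j) ω

def pr {k : ℕ} (x : Set Ω) (j : Fin k) : Set (Ω × Fin k) := {p | p.1 ∈ x ∧ p.2 = j}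

theorem fiber_pr {k : ℕ} (x : Set Ω) (j m : Fin k) :
    fiber (pr x j) m = if m = j then x else ∅ := by
  ext ω
  by_cases h : m = j <;> simp [fiber, pr, h]

def wcell {Ω : Type*} {k : ℕ} (G : Subgroup (Equiv.Perm (Fin k))) (α : Fin k → Set (Set Ω)) :
    Set (Set (Ω × Fin k)) :=
  {s | ∃ π ∈ G, ∀ j, fiber s j ∈ α (π⁻¹ j)}

theorem wcell_mem_wreath {S : Set (Set (Set Ω))} {k : ℕ} {G : Subgroup (Equiv.Perm (Fin k))}
    {α : Fin k → Set (Set Ω)} (hα : ∀ j, α j ∈ S) : wcell G α ∈ wreath S G :=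
  ⟨α, hα, rfl⟩

theorem mem_wcell_self {k : ℕ} {G : Subgroup (Equiv.Perm (Fin k))}
    {α : Fin k → Set (Set Ω)} {s : Set (Ω × Fin k)} (hs : ∀ j, fiber s j ∈ α j) :
    s ∈ wcell G α :=
  ⟨1, one_mem G, fun j => by simpa using hs j⟩

theorem exists_wcell {k : ℕ} {S : Set (Set (Set Ω))} (hP : Setoid.IsPartition S)
    (G : Subgroup (Equiv.Perm (Fin k))) (s : Set (Ω × Fin k)) :
    ∃ α : Fin k → Set (Set Ω), (∀ j, α j ∈ S) ∧ (∀ j, fiber s j ∈ α j) := by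
  have h : ∀ j, ∃ β, β ∈ S ∧ fiber s j ∈ β := fun j => (hP.2 (fiber s j)).exists
  choose α h1 h2 using h
  exact ⟨α, h1, h2⟩

end Proof
section Proof2

variable {Ω : Type*}

theorem wcell_congr {k : ℕ} {S : Set (Set (Set Ω))} (hP : Setoid.IsPartition S)
    {G : Subgroup (Equiv.Perm (Fin k))} {α α' : Fin k → Set (Set Ω)}
    (hα : ∀ j, α j ∈ S) (hα' : ∀ j, α' j ∈ S) {s : Set (Ω × Fin k)}
    (hs : s ∈ wcell G α) (hs' : s ∈ wcell G α') : wcell G α = wcell G α' := by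
  obtain ⟨π, hπ, hf⟩ := hs
  obtain ⟨π', hπ', hf'⟩ := hs'
  have key : ∀ m, α' (π'⁻¹ m) = α (π⁻¹ m) :=
    fun m => cell_eq hP (hα' _) (hα _) (hf' m) (hf m)
  ext t
  constructor
  · rintro ⟨τ, hτ, hft⟩
    refine ⟨τ * π⁻¹ * π', mul_mem (mul_mem hτ (inv_mem hπ)) hπ', fun j => ?_⟩
    have h1 : (τ * π⁻¹ * π')⁻¹ j = π'⁻¹ (π (τ⁻¹ j)) := by
      simp [mul_inv_rev, Equiv.Perm.mul_apply]
    rw [h1, key (π (τ⁻¹ j))]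
    simpa using hft j
  · rintro ⟨τ, hτ, hft⟩
    refine ⟨τ * π'⁻¹ * π, mul_mem (mul_mem hτ (inv_mem hπ')) hπ, fun j => ?_⟩
    have h1 : (τ * π'⁻¹ * π)⁻¹ j = π⁻¹ (π' (τ⁻¹ j)) := by
      simp [mul_inv_rev, Equiv.Perm.mul_apply]
    rw [h1, ← key (π' (τ⁻¹ j))]
    simpa using hft j

def wrPerm {k : ℕ} (g : Fin k → Equiv.Perm Ω) (σ : Equiv.Perm (Fin k)) :
    Equiv.Perm (Ω × Fin k) where
  toFun p := (g (σ p.2) p.1, σ p.2)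
  invFun p := ((g p.2)⁻¹ p.1, σ⁻¹ p.2)
  left_inv := by rintro ⟨ω, j⟩; simp
  right_inv := by rintro ⟨ω, j⟩; simp

theorem wrPerm_inv {k : ℕ} (g : Fin k → Equiv.Perm Ω) (σ : Equiv.Perm (Fin k)) :
    (wrPerm g σ)⁻¹ = wrPerm (fun j => (g (σ j))⁻¹) σ⁻¹ := by
  apply Equiv.ext
  rintro ⟨ω, j⟩
  show (wrPerm g σ).symm (ω, j) = _
  simp [wrPerm]

theorem fiber_image_wrPerm {k : ℕ} (g : Fin k → Equiv.Perm Ω) (σ : Equiv.Perm (Fin k))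
    (s : Set (Ω × Fin k)) (j : Fin k) :
    fiber (⇑(wrPerm g σ) '' s) j = ⇑(g j) '' fiber s (σ⁻¹ j) := by
  ext ω
  constructor
  · rintro ⟨⟨ω', j'⟩, hmem, heq⟩
    simp only [wrPerm, Equiv.coe_fn_mk, Prod.mk.injEq] at heq
    obtain ⟨h1, h2⟩ := heq
    subst h2
    refine ⟨ω', ?_, h1⟩
    show (ω', σ⁻¹ (σ j')) ∈ s
    simpa using hmem
  · rintro ⟨ω', hω', rfl⟩
    exact ⟨(ω', σ⁻¹ j), hω', by simp [wrPerm]⟩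

theorem wrPerm_image_mem {k : ℕ} {S : Set (Set (Set Ω))} {G : Subgroup (Equiv.Perm (Fin k))}
    {g : Fin k → Equiv.Perm Ω} (hg : ∀ j, g j ∈ setAutGroup S)
    {σ : Equiv.Perm (Fin k)} (hσ : σ ∈ G) {α : Fin k → Set (Set Ω)} (hα : ∀ j, α j ∈ S)
    {s : Set (Ω × Fin k)} (hs : s ∈ wcell G α) : ⇑(wrPerm g σ) '' s ∈ wcell G α := by
  obtain ⟨π, hπ, hf⟩ := hs
  refine ⟨σ * π, mul_mem hσ hπ, fun j => ?_⟩
  rw [fiber_image_wrPerm]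
  have h1 : (σ * π)⁻¹ j = π⁻¹ (σ⁻¹ j) := by simp [mul_inv_rev, Equiv.Perm.mul_apply]
  rw [h1]
  exact (mem_setAutGroup.mp (hg j) _ (hα _) (fiber s (σ⁻¹ j))).mp (hf (σ⁻¹ j))

theorem wrPerm_mem_aut {k : ℕ} {S : Set (Set (Set Ω))} {G : Subgroup (Equiv.Perm (Fin k))}
    {g : Fin k → Equiv.Perm Ω} (hg : ∀ j, g j ∈ setAutGroup S)
    {σ : Equiv.Perm (Fin k)} (hσ : σ ∈ G) :
    wrPerm g σ ∈ setAutGroup (wreath S G) := by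
  rw [mem_setAutGroup]
  rintro c ⟨α, hα, rfl⟩ s
  constructor
  · exact fun hs => wrPerm_image_mem hg hσ hα hs
  · intro hs
    have hg' : ∀ j, (fun j => (g (σ j))⁻¹) j ∈ setAutGroup S := fun j => inv_mem (hg (σ j))
    have h2 := wrPerm_image_mem hg' (inv_mem hσ) hα hs
    rw [← wrPerm_inv, perm_image_inv] at h2
    exact h2

end Proof2
section Proof3

variable {Ω : Type*}

theorem schurian_to_wreath {S : Set (Set (Set Ω))} (hS : IsSAS S) {k : ℕ}
    (G : Subgroup (Equiv.Perm (Fin k))) (hSch : SetSchurian S) :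
    SetSchurian (wreath S G) := by
  have key : ∀ (α : Fin k → Set (Set Ω)), (∀ j, α j ∈ S) → ∀ s : Set (Ω × Fin k),
      (∀ j, fiber s j ∈ α j) →
      wcell G α = {t | ∃ P ∈ setAutGroup (wreath S G), t = ⇑P '' s} := by
    intro α hα s hs
    have hsc : s ∈ wcell G α := mem_wcell_self hs
    have hw : wcell G α ∈ wreath S G := wcell_mem_wreath hα
    ext t
    constructor
    · rintro ⟨π, hπ, hft⟩
      have hrel : ∀ j, ∃ g ∈ setAutGroup S, fiber t j = ⇑g '' fiber s (π⁻¹ j) :=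
        fun j => rel_of_schurian hSch (hα _) (hs (π⁻¹ j)) (hft j)
      choose g hg hfib using hrel
      refine ⟨wrPerm g π, wrPerm_mem_aut hg hπ, ?_⟩
      refine (set_eq_of_fiber_eq fun j => ?_).symm
      rw [fiber_image_wrPerm]
      exact (hfib j).symm
    · rintro ⟨P, hP, rfl⟩
      exact (mem_setAutGroup.mp hP (wcell G α) hw s).mp hsc
  apply Set.Subset.antisymm
  · rintro c ⟨α, hα, rfl⟩
    have hne : ∀ j, (α j).Nonempty := fun j => cell_nonempty hS.1 (hα j)
    choose a ha using hne
    have hfib : ∀ j, fiber {p : Ω × Fin k | p.1 ∈ a p.2} j = a j := fun j => rfl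
    exact ⟨{p : Ω × Fin k | p.1 ∈ a p.2},
      (key α hα _ (fun j => (hfib j).symm ▸ ha j)).symm⟩
  · rintro c ⟨s, rfl⟩
    obtain ⟨α, hα, hf⟩ := exists_wcell hS.1 G s
    have h2 : (fun a : Set (Ω × Fin k) => {b | ∃ π ∈ setAutGroup (wreath S G), b = ⇑π '' a}) s
        = wcell G α := (key α hα s hf).symm
    exact h2 ▸ wcell_mem_wreath hα

end Proof3
section Proof4

variable {Ω : Type*}

theorem image_pr {k : ℕ} {P : Equiv.Perm (Ω × Fin k)} {g : Ω → Ω} {j0 : Fin k}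
    (hb : ∀ ω, P (ω, j0) = (g ω, j0)) (x : Set Ω) :
    ⇑P '' pr x j0 = pr (g '' x) j0 := by
  ext ⟨ω, m⟩
  constructor
  · rintro ⟨⟨ω', m'⟩, ⟨hω', hm'⟩, heq⟩
    simp only at hm'
    rw [hm', hb ω'] at heq
    have h1 : g ω' = ω := congrArg Prod.fst heq
    have h2 : j0 = m := congrArg Prod.snd heq
    exact ⟨⟨ω', hω', h1⟩, h2.symm⟩
  · rintro ⟨hω, hm⟩
    simp only at hω hm
    obtain ⟨ω', hω', rfl⟩ := hω
    refine ⟨(ω', j0), ⟨hω', rfl⟩, ?_⟩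
    rw [hb ω', hm]

theorem mem_wcell_ifcell [Finite Ω] {S : Set (Set (Set Ω))} (hS : IsSAS S) {k : ℕ}
    {G : Subgroup (Equiv.Perm (Fin k))} {β : Set (Set Ω)} (hβ : β ∈ S)
    {x : Set Ω} (hx : x ∈ β) (j0 : Fin k) :
    pr x j0 ∈ wcell G (fun m => if m = j0 then β else {∅}) := by
  refine mem_wcell_self fun m => ?_
  rw [fiber_pr]
  by_cases h : m = j0 <;> simp [h, hx]

theorem ifcell_mem [Finite Ω] {S : Set (Set (Set Ω))} (hS : IsSAS S) {k : ℕ}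
    {β : Set (Set Ω)} (hβ : β ∈ S) (j0 : Fin k) :
    ∀ m : Fin k, (if m = j0 then β else ({∅} : Set (Set Ω))) ∈ S := by
  intro m
  by_cases h : m = j0 <;> simp [h, hβ, empty_cell_mem hS]

theorem block_lemma [Finite Ω] {S : Set (Set (Set Ω))} (hS : IsSAS S) {k : ℕ}
    {G : Subgroup (Equiv.Perm (Fin k))}
    {P : Equiv.Perm (Ω × Fin k)} (hP : P ∈ setAutGroup (wreath S G))
    (x : Set Ω) (j : Fin k) : ∃ i, ∀ p ∈ ⇑P '' pr x j, p.2 = i := by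
  obtain ⟨β, ⟨hβ, hxβ⟩, -⟩ := hS.1.2 x
  set α : Fin k → Set (Set Ω) := fun m => if m = j then β else {∅} with hα
  have hαS : ∀ m, α m ∈ S := ifcell_mem hS hβ j
  have hw : wcell G α ∈ wreath S G := wcell_mem_wreath hαS
  have hs : pr x j ∈ wcell G α := mem_wcell_ifcell hS hβ hxβ j
  have himg := (mem_setAutGroup.mp hP (wcell G α) hw (pr x j)).mp hs
  obtain ⟨π, hπ, hf⟩ := himg
  refine ⟨π j, ?_⟩
  rintro ⟨ω, m⟩ hp
  by_contra hne
  have h2 : π⁻¹ m ≠ j := by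
    intro h
    exact hne (show m = π j by rw [← h]; simp)
  have h3 : α (π⁻¹ m) = {∅} := by simp only [hα]; exact if_neg h2
  have h1 : fiber (⇑P '' pr x j) m ∈ α (π⁻¹ m) := hf m
  rw [h3, Set.mem_singleton_iff] at h1
  have hmem : ω ∈ fiber (⇑P '' pr x j) m := hp
  rw [h1] at hmem
  exact hmem

theorem fwd_lemma [Finite Ω] {S : Set (Set (Set Ω))} (hS : IsSAS S) {k : ℕ}
    {G : Subgroup (Equiv.Perm (Fin k))}
    {P : Equiv.Perm (Ω × Fin k)} (hP : P ∈ setAutGroup (wreath S G))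
    {g : Ω → Ω} {j0 : Fin k} (hb : ∀ ω, P (ω, j0) = (g ω, j0))
    {β : Set (Set Ω)} (hβ : β ∈ S) {x : Set Ω} (hx : x ∈ β) (hne : x.Nonempty) :
    g '' x ∈ β := by
  set α : Fin k → Set (Set Ω) := fun m => if m = j0 then β else {∅} with hα
  have hαS : ∀ m, α m ∈ S := ifcell_mem hS hβ j0
  have hw : wcell G α ∈ wreath S G := wcell_mem_wreath hαS
  have hs : pr x j0 ∈ wcell G α := mem_wcell_ifcell hS hβ hx j0
  have h2 := (mem_setAutGroup.mp hP _ hw _).mp hs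
  rw [image_pr hb] at h2
  obtain ⟨π, hπ, hf⟩ := h2
  have h3 := hf j0
  rw [fiber_pr, if_pos rfl] at h3
  by_cases hj : π⁻¹ j0 = j0
  · rw [hj] at h3
    simpa [hα] using h3
  · have h4 : α (π⁻¹ j0) = {∅} := by simp only [hα]; exact if_neg hj
    rw [h4, Set.mem_singleton_iff] at h3
    exact absurd h3 (Set.nonempty_iff_ne_empty.mp (hne.image g))

end Proof4
section Proof5

variable {Ω : Type*}

theorem keyF_lemma [Finite Ω] {S : Set (Set (Set Ω))} (hS : IsSAS S) {k : ℕ} (hk : 1 ≤ k)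
    {G : Subgroup (Equiv.Perm (Fin k))} (hW : SetSchurian (wreath S G)) :
    ∀ β ∈ S, ∀ a ∈ β, ∀ b ∈ β, ∃ g ∈ setAutGroup S, b = ⇑g '' a := by
  intro β hβ a ha b hb
  set j0 : Fin k := ⟨0, hk⟩ with hj0
  by_cases hae : a = ∅
  · have hbcard : b.ncard = a.ncard := hS.2.1 β hβ b hb a ha
    rw [hae, Set.ncard_empty] at hbcard
    have hbe : b = ∅ := (Set.ncard_eq_zero b.toFinite).mp hbcard
    exact ⟨1, one_mem _, by simp [hae, hbe]⟩
  have hane : a.Nonempty := Set.nonempty_iff_ne_empty.mpr hae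
  have hbne : b.Nonempty := by
    rw [Set.nonempty_iff_ne_empty]
    intro hbe
    apply hae
    have hc := hS.2.1 β hβ a ha b hb
    rw [hbe, Set.ncard_empty] at hc
    exact (Set.ncard_eq_zero a.toFinite).mp hc
  set α : Fin k → Set (Set Ω) := fun m => if m = j0 then β else {∅} with hα
  have hαS : ∀ m, α m ∈ S := ifcell_mem hS hβ j0
  have hwα : wcell G α ∈ wreath S G := wcell_mem_wreath hαS
  have hsa : pr a j0 ∈ wcell G α := mem_wcell_ifcell hS hβ ha j0
  have hsb : pr b j0 ∈ wcell G α := mem_wcell_ifcell hS hβ hb j0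
  -- use schurianity of the wreath product
  have hwα' := hwα
  rw [hW] at hwα'
  obtain ⟨s₀, hs₀⟩ := hwα'
  rw [← hs₀] at hsa hsb
  obtain ⟨P₁, hP₁, hps⟩ := hsa
  obtain ⟨P₂, hP₂, hpt⟩ := hsb
  set P : Equiv.Perm (Ω × Fin k) := P₂ * P₁⁻¹ with hPdef
  have hP : P ∈ setAutGroup (wreath S G) := mul_mem hP₂ (inv_mem hP₁)
  have hPst : ⇑P '' pr a j0 = pr b j0 := by
    rw [hps, hPdef, perm_image_mul, perm_image_inv, ← hpt]
  have hPst' : ⇑P⁻¹ '' pr b j0 = pr a j0 := by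
    rw [← hPst, perm_image_inv]
  -- block fixing
  have h2 : ∀ ω : Ω, (P (ω, j0)).2 = j0 := by
    intro ω
    obtain ⟨i, hi⟩ := block_lemma hS hP (insert ω a) j0
    have hsub : ⇑P '' pr a j0 ⊆ ⇑P '' pr (insert ω a) j0 :=
      Set.image_mono (fun p hp => ⟨Set.mem_insert_of_mem _ hp.1, hp.2⟩)
    obtain ⟨ωb, hωb⟩ := hbne
    have hb0 : ((ωb, j0) : Ω × Fin k) ∈ ⇑P '' pr a j0 := by
      rw [hPst]; exact ⟨hωb, rfl⟩
    have hij0 : j0 = i := hi _ (hsub hb0)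
    have hp : P (ω, j0) ∈ ⇑P '' pr (insert ω a) j0 :=
      ⟨(ω, j0), ⟨Set.mem_insert _ _, rfl⟩, rfl⟩
    rw [← hij0] at hi
    exact hi _ hp
  have h2' : ∀ ω : Ω, (P⁻¹ (ω, j0)).2 = j0 := by
    intro ω
    obtain ⟨i, hi⟩ := block_lemma hS (inv_mem hP) (insert ω b) j0
    have hsub : ⇑P⁻¹ '' pr b j0 ⊆ ⇑P⁻¹ '' pr (insert ω b) j0 :=
      Set.image_mono (fun p hp => ⟨Set.mem_insert_of_mem _ hp.1, hp.2⟩)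
    obtain ⟨ωa, hωa⟩ := hane
    have hb0 : ((ωa, j0) : Ω × Fin k) ∈ ⇑P⁻¹ '' pr b j0 := by
      rw [hPst']; exact ⟨hωa, rfl⟩
    have hij0 : j0 = i := hi _ (hsub hb0)
    have hp : P⁻¹ (ω, j0) ∈ ⇑P⁻¹ '' pr (insert ω b) j0 :=
      ⟨(ω, j0), ⟨Set.mem_insert _ _, rfl⟩, rfl⟩
    rw [← hij0] at hi
    exact hi _ hp
  -- construct g
  set g : Equiv.Perm Ω :=
    { toFun := fun ω => (P (ω, j0)).1
      invFun := fun ω => (P⁻¹ (ω, j0)).1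
      left_inv := by
        intro ω
        have hpe : (((P (ω, j0)).1, j0) : Ω × Fin k) = P (ω, j0) :=
          Prod.ext rfl (h2 ω).symm
        show (P⁻¹ (((P (ω, j0)).1, j0))).1 = ω
        rw [hpe]
        simp
      right_inv := by
        intro ω
        have hpe : (((P⁻¹ (ω, j0)).1, j0) : Ω × Fin k) = P⁻¹ (ω, j0) :=
          Prod.ext rfl (h2' ω).symm
        show (P (((P⁻¹ (ω, j0)).1, j0))).1 = ω
        rw [hpe]
        simp } with hgdef
  have hgb : ∀ ω, P (ω, j0) = (g ω, j0) := by
    intro ω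
    refine Prod.ext ?_ (h2 ω)
    rfl
  have hgb' : ∀ ω, P⁻¹ (ω, j0) = (g⁻¹ ω, j0) := by
    intro ω
    refine Prod.ext ?_ (h2' ω)
    rfl
  -- b = g '' a
  have himg : ⇑P '' pr a j0 = pr (⇑g '' a) j0 := image_pr hgb a
  have hba : ⇑g '' a = b := by
    have h5 : pr (⇑g '' a) j0 = pr b j0 := by rw [← himg, hPst]
    have h6 := congrArg (fun u => fiber u j0) h5
    simpa [fiber_pr] using h6
  -- g is an automorphism of S
  refine ⟨g, ?_, hba.symm⟩
  rw [mem_setAutGroup]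
  intro β' hβ' x
  constructor
  · intro hx
    by_cases hxe : x = ∅
    · rw [hxe, Set.image_empty]
      rwa [hxe] at hx
    · exact fwd_lemma hS hP hgb hβ' hx (Set.nonempty_iff_ne_empty.mpr hxe)
  · intro hgx
    by_cases hxe : x = ∅
    · rw [hxe, Set.image_empty] at hgx
      rwa [hxe]
    · have hne : (⇑g '' x).Nonempty := (Set.nonempty_iff_ne_empty.mpr hxe).image _
      have h7 := fwd_lemma hS (inv_mem hP) hgb' hβ' hgx hne
      rwa [perm_image_inv] at h7

theorem wreath_to_schurian [Finite Ω] {S : Set (Set (Set Ω))} (hS : IsSAS S) {k : ℕ}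
    (hk : 1 ≤ k) {G : Subgroup (Equiv.Perm (Fin k))} (hW : SetSchurian (wreath S G)) :
    SetSchurian S := by
  have keyF := keyF_lemma hS hk hW
  apply Set.Subset.antisymm
  · intro β hβ
    obtain ⟨a, ha⟩ := cell_nonempty hS.1 hβ
    refine ⟨a, ?_⟩
    ext b
    constructor
    · rintro ⟨g, hg, rfl⟩
      exact (mem_setAutGroup.mp hg β hβ a).mp ha
    · intro hb
      exact keyF β hβ a ha b hb
  · rintro β ⟨a, rfl⟩
    obtain ⟨γ, ⟨hγ, haγ⟩, -⟩ := hS.1.2 a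
    have horb : {b | ∃ π ∈ setAutGroup S, b = ⇑π '' a} = γ := by
      ext b
      constructor
      · rintro ⟨g, hg, rfl⟩
        exact (mem_setAutGroup.mp hg γ hγ a).mp haγ
      · intro hb
        exact keyF γ hγ a haγ b hb
    show {b | ∃ π ∈ setAutGroup S, b = ⇑π '' a} ∈ S
    rw [horb]
    exact hγ

end Proof5

theorem stmt12 {Ω : Type*} [Finite Ω] (S : Set (Set (Set Ω))) (hS : IsSAS S)
    (k : ℕ) (hk : 1 ≤ k) (G : Subgroup (Equiv.Perm (Fin k))) :
    SetSchurian (wreath S G) ↔ SetSchurian S := by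
  exact ⟨fun hW => wreath_to_schurian hS hk hW, fun hSch => schurian_to_wreath hS G hSch⟩

end Paper
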